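/- Let ω ∈ ⋀³V* be a 3-form on a finite-dimensional vector space V. If for every nonzero v ∈ V the 2-form ω(v) = ω(v ∧ − ∧ −) has rank greater than 2 (condition GC3), then: (a) ω is indecomposable, i.e. the map V* → ⋀⁴V*, x ↦ ω ∧ x, is injective (GC1), and (b) the map V → ⋀²V*, v ↦ ω(v), is injective (GC2). -/

import Mathlib

open Module

lemma span_pair_finrank_le (K W : Type*) [Field K] [AddCommGroup W] [Module K W]
    (a b : W) : finrank K (Submodule.span K {a, b}) ≤ 2 := by
  classical
  have := finrank_span_le_card (R := K) ({a, b} : Set W)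
  refine this.trans ?_
  have : ({a, b} : Set W).toFinset ⊆ {a, b} := by
    intro x hx
    simp only [Set.mem_toFinset, Set.mem_insert_iff, Set.mem_singleton_iff] at hx
    simpa using hx
  calc ({a, b} : Set W).toFinset.card ≤ ({a, b} : Finset W).card := Finset.card_le_card this
    _ ≤ 2 := Finset.card_insert_le _ _ |>.trans (by simp)

/-- If a 3-form `ω` on a finite-dimensional space `V` satisfies (GC3): for every
nonzero `v ∈ V` the 2-form `ω(v) = ω(v ∧ − ∧ −)` has rank greater than 2, then
(a) `ω` is indecomposable, i.e. `x ↦ ω ∧ x` is injective (GC1), and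
(b) `v ↦ ω(v)` is injective (GC2). Here the rank of the 2-form `ω(v)` is the
dimension of the span of the 1-forms `u ↦ ω(v, w, u)`, `w ∈ V`, and `ω ∧ x` is
given on quadruples by the usual shuffle formula. -/
theorem stmt_5 (K V : Type*) [Field K] [CharZero K] [AddCommGroup V] [Module K V]
    [FiniteDimensional K V] (ω : AlternatingMap K V K (Fin 3))
    (hGC3 : ∀ v : V, v ≠ 0 →
      2 < finrank K (Submodule.span K
        {g : V → K | ∃ w : V, g = fun u => ω ![v, w, u]})) :
    (∀ x : Module.Dual K V,
      (∀ v₀ v₁ v₂ v₃ : V,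
        ω ![v₁, v₂, v₃] * x v₀ - ω ![v₀, v₂, v₃] * x v₁ +
          ω ![v₀, v₁, v₃] * x v₂ - ω ![v₀, v₁, v₂] * x v₃ = 0) → x = 0) ∧
    (∀ v : V, (∀ a b : V, ω ![v, a, b] = 0) → v = 0) := by
  constructor
  · intro x hx
    by_contra hx0
    obtain ⟨v₀, hv₀⟩ : ∃ v₀ : V, x v₀ ≠ 0 := by
      by_contra h
      push_neg at h
      exact hx0 (by ext v; simpa using h v)
    by_cases hker : ∃ v : V, v ≠ 0 ∧ x v = 0
    · obtain ⟨v, hv, hxv⟩ := hker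
      have h3 := hGC3 v hv
      have hle : Submodule.span K {g : V → K | ∃ w : V, g = fun u => ω ![v, w, u]}
          ≤ Submodule.span K {(⇑x : V → K), fun u => ω ![v₀, v, u]} := by
        rw [Submodule.span_le]
        rintro g ⟨w, rfl⟩
        have hg : (fun u => ω ![v, w, u])
            = (ω ![v₀, v, w] / x v₀) • (⇑x : V → K)
              + (-(x w) / x v₀) • (fun u => ω ![v₀, v, u]) := by
          funext u
          have h := hx v₀ v w u
          rw [hxv] at h
          simp only [Pi.add_apply, Pi.smul_apply, smul_eq_mul]
          field_simp
          linear_combination h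
        rw [hg]
        exact Submodule.add_mem _
          (Submodule.smul_mem _ _ (Submodule.subset_span (by simp)))
          (Submodule.smul_mem _ _ (Submodule.subset_span (by simp)))
      haveI : FiniteDimensional K
          (Submodule.span K ({(⇑x : V → K), fun u => ω ![v₀, v, u]} : Set (V → K))) :=
        FiniteDimensional.span_of_finite K
          ((Set.finite_singleton _).insert _)
      have := (Submodule.finrank_mono hle).trans
        (span_pair_finrank_le K (V → K) _ _)
      omega
    · push_neg at hker
      have hv₀ne : v₀ ≠ 0 := fun h => hv₀ (by simp [h])
      have h3 := hGC3 v₀ hv₀ne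
      have hle : Submodule.span K {g : V → K | ∃ w : V, g = fun u => ω ![v₀, w, u]}
          ≤ ⊥ := by
        rw [Submodule.span_le]
        rintro g ⟨w, rfl⟩
        have hw : w = (x w / x v₀) • v₀ := by
          have h0 : w - (x w / x v₀) • v₀ = 0 := by
            by_contra hne
            have := hker _ hne
            apply this
            simp only [map_sub, map_smul, smul_eq_mul]
            field_simp
            simp
          exact sub_eq_zero.mp h0
        have hg : (fun u => ω ![v₀, w, u]) = (0 : V → K) := by
          funext u
          rw [hw]
          have e : ![v₀, (x w / x v₀) • v₀, u]
              = Function.update ![v₀, v₀, u] 1 ((x w / x v₀) • v₀) := by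
            funext i; fin_cases i <;> simp
          have e' : Function.update ![v₀, v₀, u] 1 v₀ = ![v₀, v₀, u] := by
            funext i; fin_cases i <;> simp
          rw [e, ω.map_update_smul, e',
            ω.map_eq_zero_of_eq ![v₀, v₀, u] (i := 0) (j := 1) (by simp) (by decide)]
          simp
        simp [hg]
      rw [le_bot_iff] at hle
      rw [hle] at h3
      simp [finrank_bot] at h3
  · intro v hvab
    by_contra hv
    have h3 := hGC3 v hv
    have hle : Submodule.span K {g : V → K | ∃ w : V, g = fun u => ω ![v, w, u]} ≤ ⊥ := by
      rw [Submodule.span_le]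
      rintro g ⟨w, rfl⟩
      have : (fun u => ω ![v, w, u]) = (0 : V → K) := by
        funext u; exact hvab w u
      simp [this]
    rw [le_bot_iff] at hle
    rw [hle] at h3
    simp [finrank_bot] at h3
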